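/- arXiv:1709.08311 — 3 statements merged into one kernel-verified Lean document; each statement's English description precedes it below -/
import Mathlib

section
/- Let A, B be types with Maltsev operations m_A, m_B, and let C ⊆ A × B be subdirect and closed under componentwise Maltsev application. Let α, β be the linkedness equivalence relations on A and B respectively. If C₁ ⊆ A is an α-equivalence class and C₂ ⊆ B is a β-equivalence class, and some a ∈ C₁, b ∈ C₂ satisfy (a,b) ∈ C, then C₁ × C₂ ⊆ C. -/
def IsMaltsev {A : Type*} (m : A → A → A → A) : Prop :=
  (∀ x y, m x x y = y) ∧ (∀ x y, m y x x = y)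

theorem stmt_5 {A B : Type*} (mA : A → A → A → A) (mB : B → B → B → B)
    (hA : IsMaltsev mA) (hB : IsMaltsev mB) (C : Set (A × B))
    (hsub1 : ∀ a : A, ∃ b : B, (a, b) ∈ C) (hsub2 : ∀ b : B, ∃ a : A, (a, b) ∈ C)
    (hC : ∀ p q r : A × B, p ∈ C → q ∈ C → r ∈ C →
      (mA p.1 q.1 r.1, mB p.2 q.2 r.2) ∈ C)
    (C₁ : Set A) (C₂ : Set B)
    (hC₁ : ∃ a₀ : A, C₁ = {a' : A | ∃ b : B, (a₀, b) ∈ C ∧ (a', b) ∈ C})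
    (hC₂ : ∃ b₀ : B, C₂ = {b' : B | ∃ a : A, (a, b₀) ∈ C ∧ (a, b') ∈ C})
    (hconn : ∃ a ∈ C₁, ∃ b ∈ C₂, (a, b) ∈ C) :
    ∀ a ∈ C₁, ∀ b ∈ C₂, (a, b) ∈ C := by
  obtain ⟨a₀, rfl⟩ := hC₁
  obtain ⟨b₀, rfl⟩ := hC₂
  obtain ⟨a, ⟨b₂, hab2a, hab2b⟩, b, ⟨a₂, hba2a, hba2b⟩, hab⟩ := hconn
  intro a' ha' b' hb'
  obtain ⟨b₁, h1a, h1b⟩ := ha'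
  obtain ⟨a₁, h2a, h2b⟩ := hb'
  -- (a', b₂) ∈ C
  have s1 := hC _ _ _ h1b h1a hab2a
  simp only [hA.2, hB.1] at s1
  -- (a', b) ∈ C
  have s2 := hC _ _ _ s1 hab2b hab
  simp only [hA.2, hB.1] at s2
  -- (a₂, b') ∈ C
  have s3 := hC _ _ _ h2b h2a hba2a
  simp only [hA.1, hB.2] at s3
  -- (a', b') ∈ C
  have s4 := hC _ _ _ s2 hba2b s3
  simp only [hA.2, hB.1] at s4
  exact s4
end

section
/- Let A, B be types with Maltsev operations, and C ⊆ A × B subdirect and closed under componentwise Maltsev application. If C is linked (the linkedness relation on A is the full relation), then C = A × B. -/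
theorem stmt_6 {A B : Type*} (mA : A → A → A → A) (mB : B → B → B → B)
    (hA : IsMaltsev mA) (hB : IsMaltsev mB) (C : Set (A × B))
    (hsub1 : ∀ a : A, ∃ b : B, (a, b) ∈ C) (hsub2 : ∀ b : B, ∃ a : A, (a, b) ∈ C)
    (hC : ∀ p q r : A × B, p ∈ C → q ∈ C → r ∈ C →
      (mA p.1 q.1 r.1, mB p.2 q.2 r.2) ∈ C)
    (hlinked : ∀ a a' : A,
      Relation.ReflTransGen (fun x y : A => ∃ b : B, (x, b) ∈ C ∧ (y, b) ∈ C) a a') :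
    C = Set.univ := by
  ext ⟨a, b⟩
  simp only [Set.mem_univ, iff_true]
  obtain ⟨a₀, ha₀⟩ := hsub2 b
  have := hlinked a₀ a
  induction this with
  | refl => exact ha₀
  | tail _ hstep ih =>
    rename_i c d _
    obtain ⟨b', hc, hd⟩ := hstep
    have := hC (d, b') (c, b') (c, b) hd hc ih
    simpa [hA.2, hB.1] using this
end

section
/- Let A, B be finite types with Maltsev operations, and let C ⊆ A × B be subdirect and closed under componentwise Maltsev application. Suppose A admits no nontrivial proper equivalence relation compatible with its Maltsev operation (A is 'simple') and similarly for B. Then C is either the full product A × B or the graph of a bijection between A and B. -/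
theorem stmt_14 {A B : Type*} [Finite A] [Finite B]
    (mA : A → A → A → A) (mB : B → B → B → B)
    (hA : IsMaltsev mA) (hB : IsMaltsev mB) (C : Set (A × B))
    (hsub1 : ∀ a : A, ∃ b : B, (a, b) ∈ C) (hsub2 : ∀ b : B, ∃ a : A, (a, b) ∈ C)
    (hC : ∀ p q r : A × B, p ∈ C → q ∈ C → r ∈ C →
      (mA p.1 q.1 r.1, mB p.2 q.2 r.2) ∈ C)
    (hAsimple : ∀ θ : A → A → Prop, Equivalence θ →
      (∀ x x' y y' z z' : A, θ x x' → θ y y' → θ z z' → θ (mA x y z) (mA x' y' z')) →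
      (∀ a b : A, θ a b → a = b) ∨ (∀ a b : A, θ a b))
    (hBsimple : ∀ θ : B → B → Prop, Equivalence θ →
      (∀ x x' y y' z z' : B, θ x x' → θ y y' → θ z z' → θ (mB x y z) (mB x' y' z')) →
      (∀ a b : B, θ a b → a = b) ∨ (∀ a b : B, θ a b)) :
    C = Set.univ ∨ ∃ f : A → B, Function.Bijective f ∧ C = {p : A × B | p.2 = f p.1} := by
  classical
  -- linking lemma: rectangle completion
  have linkA : ∀ a b b' a', (a, b) ∈ C → (a', b) ∈ C → (a', b') ∈ C → (a, b') ∈ C := by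
    intro a b b' a' h1 h2 h3
    have := hC (a', b') (a', b) (a, b) h3 h2 h1
    simpa [hA.1, hB.2] using this
  have linkB : ∀ a b a' b', (a, b) ∈ C → (a, b') ∈ C → (a', b') ∈ C → (a', b) ∈ C := by
    intro a b a' b' h1 h2 h3
    have := hC (a', b') (a, b') (a, b) h3 h2 h1
    simpa [hA.2, hB.1] using this
  -- the linkedness relation on A
  set θA : A → A → Prop := fun a a' => ∃ b, (a, b) ∈ C ∧ (a', b) ∈ C with hθAdef
  have θAequiv : Equivalence θA := by
    constructor
    · intro a; obtain ⟨b, hb⟩ := hsub1 a; exact ⟨b, hb, hb⟩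
    · rintro a a' ⟨b, h1, h2⟩; exact ⟨b, h2, h1⟩
    · rintro a a' a'' ⟨b, h1, h2⟩ ⟨b', h3, h4⟩
      exact ⟨b', linkA a b b' a' h1 h2 h3, h4⟩
  have θAcomp : ∀ x x' y y' z z' : A, θA x x' → θA y y' → θA z z' →
      θA (mA x y z) (mA x' y' z') := by
    rintro x x' y y' z z' ⟨b1, h1, h1'⟩ ⟨b2, h2, h2'⟩ ⟨b3, h3, h3'⟩
    exact ⟨mB b1 b2 b3, hC (x, b1) (y, b2) (z, b3) h1 h2 h3,
      hC (x', b1) (y', b2) (z', b3) h1' h2' h3'⟩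
  set θB : B → B → Prop := fun b b' => ∃ a, (a, b) ∈ C ∧ (a, b') ∈ C with hθBdef
  have θBequiv : Equivalence θB := by
    constructor
    · intro b; obtain ⟨a, ha⟩ := hsub2 b; exact ⟨a, ha, ha⟩
    · rintro b b' ⟨a, h1, h2⟩; exact ⟨a, h2, h1⟩
    · rintro b b' b'' ⟨a, h1, h2⟩ ⟨a', h3, h4⟩
      exact ⟨a', linkB a b a' b' h1 h2 h3, h4⟩
  have θBcomp : ∀ x x' y y' z z' : B, θB x x' → θB y y' → θB z z' →
      θB (mB x y z) (mB x' y' z') := by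
    rintro x x' y y' z z' ⟨a1, h1, h1'⟩ ⟨a2, h2, h2'⟩ ⟨a3, h3, h3'⟩
    exact ⟨mA a1 a2 a3, hC (a1, x) (a2, y) (a3, z) h1 h2 h3,
      hC (a1, x') (a2, y') (a3, z') h1' h2' h3'⟩
  rcases hAsimple θA θAequiv θAcomp with hAeq | hAfull
  · rcases hBsimple θB θBequiv θBcomp with hBeq | hBfull
    · -- graph of a bijection
      right
      refine ⟨fun a => Classical.choose (hsub1 a), ?_, ?_⟩
      · have hmem : ∀ a, (a, Classical.choose (hsub1 a)) ∈ C :=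
          fun a => Classical.choose_spec (hsub1 a)
        constructor
        · intro a a' h
          replace h : Classical.choose (hsub1 a) = Classical.choose (hsub1 a') := h
          have h2 := hmem a'
          rw [← h] at h2
          exact hAeq a a' ⟨_, hmem a, h2⟩
        · intro b
          obtain ⟨a, ha⟩ := hsub2 b
          exact ⟨a, hBeq _ _ ⟨a, hmem a, ha⟩⟩
      · ext ⟨a, b⟩
        simp only [Set.mem_setOf_eq]
        constructor
        · intro h
          exact hBeq b _ ⟨a, h, Classical.choose_spec (hsub1 a)⟩
        · intro h
          exact h ▸ Classical.choose_spec (hsub1 a)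
    · -- θB full ⇒ C = univ
      left
      ext ⟨a, b⟩
      simp only [Set.mem_univ, iff_true]
      obtain ⟨b0, h0⟩ := hsub1 a
      obtain ⟨a1, h1, h2⟩ := hBfull b0 b
      have := hC (a, b0) (a1, b0) (a1, b) h0 h1 h2
      simpa [hA.2, hB.1] using this
  · -- θA full ⇒ C = univ
    left
    ext ⟨a, b⟩
    simp only [Set.mem_univ, iff_true]
    obtain ⟨a0, h0⟩ := hsub2 b
    obtain ⟨b1, h1, h2⟩ := hAfull a a0
    have := hC (a, b1) (a0, b1) (a0, b) h1 h2 h0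
    simpa [hA.2, hB.1] using this
end
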